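/- Let T ∈ (0,∞] and let A, B, C : [0,T) → ℝ be differentiable with A(t), B(t), C(t) > 0, satisfying A' = 4(B² − A²)/(BC), B' = 4(A² − B²)/(AC), and C' = 4(A − B)²/(AB). Then A(t)·B(t) = A(0)·B(0) and C(t)·(A(t) + B(t)) = C(0)·(A(0) + B(0)) for all t ∈ [0,T). -/

import Mathlib

open Filter Set

/-- Ricci flow ODE on the universal cover of `Isom(ℝ²)`: the quantities `A·B` and
`C·(A+B)` are conserved along the flow. -/
theorem isomR2_conserved (T : EReal) (hT : 0 < T) (A B C : ℝ → ℝ)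
    (hA : ∀ t : ℝ, 0 ≤ t → (t : EReal) < T → 0 < A t)
    (hB : ∀ t : ℝ, 0 ≤ t → (t : EReal) < T → 0 < B t)
    (hC : ∀ t : ℝ, 0 ≤ t → (t : EReal) < T → 0 < C t)
    (hA' : ∀ t : ℝ, 0 ≤ t → (t : EReal) < T →
      HasDerivAt A (4 * ((B t) ^ 2 - (A t) ^ 2) / (B t * C t)) t)
    (hB' : ∀ t : ℝ, 0 ≤ t → (t : EReal) < T →
      HasDerivAt B (4 * ((A t) ^ 2 - (B t) ^ 2) / (A t * C t)) t)
    (hC' : ∀ t : ℝ, 0 ≤ t → (t : EReal) < T →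
      HasDerivAt C (4 * (A t - B t) ^ 2 / (A t * B t)) t) :
    ∀ t : ℝ, 0 ≤ t → (t : EReal) < T →
      A t * B t = A 0 * B 0 ∧ C t * (A t + B t) = C 0 * (A 0 + B 0) := by
  intro t ht0 htT
  -- derivative facts at any admissible point
  have key1 : ∀ s : ℝ, 0 ≤ s → (s : EReal) < T →
      HasDerivAt (fun u => A u * B u) 0 s := by
    intro s hs0 hsT
    have hAs := hA s hs0 hsT
    have hBs := hB s hs0 hsT
    have hCs := hC s hs0 hsT
    have h : HasDerivAt (fun u => A u * B u) _ s := (hA' s hs0 hsT).mul (hB' s hs0 hsT)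
    convert h using 1
    field_simp
    ring
  have key2 : ∀ s : ℝ, 0 ≤ s → (s : EReal) < T →
      HasDerivAt (fun u => C u * (A u + B u)) 0 s := by
    intro s hs0 hsT
    have hAs := hA s hs0 hsT
    have hBs := hB s hs0 hsT
    have hCs := hC s hs0 hsT
    have h : HasDerivAt (fun u => C u * (A u + B u)) _ s := (hC' s hs0 hsT).mul ((hA' s hs0 hsT).add (hB' s hs0 hsT))
    convert h using 1
    field_simp
    ring
  have hmem : ∀ s ∈ Icc (0:ℝ) t, 0 ≤ s ∧ (s : EReal) < T := by
    intro s hs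
    refine ⟨hs.1, lt_of_le_of_lt ?_ htT⟩
    exact_mod_cast EReal.coe_le_coe_iff.mpr hs.2
  have const : ∀ (f : ℝ → ℝ), (∀ s : ℝ, 0 ≤ s → (s : EReal) < T → HasDerivAt f 0 s) →
      f t = f 0 := by
    intro f hf
    have hcont : ContinuousOn f (Icc 0 t) := fun s hs =>
      ((hf s (hmem s hs).1 (hmem s hs).2).continuousAt).continuousWithinAt
    have hderiv : ∀ s ∈ Ico (0:ℝ) t, HasDerivWithinAt f 0 (Ici s) s := by
      intro s hs
      exact (hf s hs.1 (lt_of_lt_of_le (by exact_mod_cast hs.2)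
        (le_of_lt htT) : (s:EReal) < T)).hasDerivWithinAt
    exact constant_of_has_deriv_right_zero hcont hderiv t (right_mem_Icc.mpr ht0)
  exact ⟨const _ key1, const _ key2⟩
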